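/- Let F be the field with 2 elements. There exists a maximal 2-code C of S_{3,2} of size 22; that is, a set C of 3×3 symmetric matrices over F with |C| = 22 such that rank(A − B) ≥ 2 for all distinct A, B ∈ C, and such that for every 3×3 symmetric matrix A over F with A ∉ C there exists B ∈ C with rank(A − B) = 1 (so C cannot be extended to a larger 2-code). -/
import Mathlib


instance : Fact (Nat.Prime 2) := ⟨by norm_num⟩

set_option maxRecDepth 40000

namespace TwoCodeAux

open Matrix

/-- Embed a boolean into `ZMod 2`. -/
def e (b : Bool) : ZMod 2 := if b then 1 else 0

/-- Build a matrix over `ZMod 2` from a boolean matrix. -/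
def mk (f : Fin 3 → Fin 3 → Bool) : Matrix (Fin 3) (Fin 3) (ZMod 2) :=
  Matrix.of fun i j => e (f i j)

@[simp] theorem mk_apply (f : Fin 3 → Fin 3 → Bool) (i j : Fin 3) :
    mk f i j = e (f i j) := rfl

theorem e_inj : ∀ a b : Bool, e a = e b → a = b := by decide

theorem e_sub : ∀ a b : Bool, e a - e b = e (xor a b) := by decide

theorem e_mul : ∀ a b : Bool, e a * e b = e (a && b) := by decide

theorem e_ne_zero : ∀ a : Bool, e a ≠ 0 ↔ a = true := by decide

theorem e_surj : ∀ x : ZMod 2, ∃ b : Bool, e b = x := by decide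

/-- The 22 boolean matrices of the code, indexed by `Fin 22`. -/
def bc : Fin 22 → Fin 3 → Fin 3 → Bool :=
  ![![![false, false, false], ![false, true, false], ![false, false, true]],
   ![![false, false, false], ![false, true, true], ![false, true, false]],
   ![![false, false, false], ![false, false, true], ![false, true, true]],
   ![![true, true, false], ![true, true, true], ![false, true, false]],
   ![![true, false, false], ![false, false, false], ![false, false, false]],
   ![![true, true, true], ![true, false, true], ![true, true, true]],
   ![![true, false, false], ![false, false, true], ![false, true, false]],
   ![![false, true, true], ![true, false, false], ![true, false, true]],
   ![![false, true, false], ![true, false, false], ![false, false, false]],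
   ![![false, false, true], ![false, true, true], ![true, true, false]],
   ![![false, true, false], ![true, true, false], ![false, false, true]],
   ![![false, false, true], ![false, false, false], ![true, false, false]],
   ![![true, false, true], ![false, false, false], ![true, false, true]],
   ![![true, true, false], ![true, true, false], ![false, false, false]],
   ![![true, true, true], ![true, true, false], ![true, false, true]],
   ![![false, true, true], ![true, false, true], ![true, true, false]],
   ![![false, true, true], ![true, true, false], ![true, false, false]],
   ![![false, false, true], ![false, true, false], ![true, false, true]],
   ![![true, true, true], ![true, true, true], ![true, true, false]],
   ![![true, true, true], ![true, false, false], ![true, false, false]],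
   ![![false, true, false], ![true, false, true], ![false, true, true]],
   ![![true, false, true], ![false, false, true], ![true, true, true]]]

theorem bsymm : ∀ p : Fin 22, ∀ i j : Fin 3, bc p i j = bc p j i := by decide

theorem bdistinct : ∀ p q : Fin 22, p ≠ q → ∃ i j : Fin 3, bc p i j ≠ bc q i j := by decide

theorem bminor : ∀ p q : Fin 22, p ≠ q →
    ∃ i j k l : Fin 3,
      xor (xor (bc p i k) (bc q i k) && xor (bc p j l) (bc q j l))
          (xor (bc p i l) (bc q i l) && xor (bc p j k) (bc q j k)) = true := by decide

theorem bmax : ∀ a b c d ee ff : Bool,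
    (∀ p : Fin 22, ∃ i j : Fin 3,
        (![![a,d,ee], ![d,b,ff], ![ee,ff,c]] : Fin 3 → Fin 3 → Bool) i j ≠ bc p i j) →
    ∃ p : Fin 22, ∃ x y z : Bool, (x || y || z) = true ∧
      ∀ i j : Fin 3,
        xor ((![![a,d,ee], ![d,b,ff], ![ee,ff,c]] : Fin 3 → Fin 3 → Bool) i j) (bc p i j)
          = (![x,y,z] i && ![x,y,z] j) := by decide

theorem or3 : ∀ x y z : Bool, (x || y || z) = true →
    ∃ i : Fin 3, (![x,y,z] : Fin 3 → Bool) i = true := by decide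

theorem mk_injective : Function.Injective mk := by
  intro f g h
  have h' : ∀ i j : Fin 3, mk f i j = mk g i j := fun i j => by rw [h]
  funext i j
  exact e_inj _ _ (h' i j)

/-- If some `m × m` submatrix of a `3 × 3` matrix over a field has a unit determinant,
then `m ≤ rank`. -/
theorem le_rank_of_submatrix {F : Type*} [Field F] {m : ℕ}
    (M : Matrix (Fin 3) (Fin 3) F) (f g : Fin m → Fin 3)
    (h : IsUnit (M.submatrix f g).det) : m ≤ M.rank := by
  classical
  have h1 : M.submatrix f g =
      ((1 : Matrix (Fin 3) (Fin 3) F).submatrix f (Equiv.refl (Fin 3))) * M *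
        ((1 : Matrix (Fin 3) (Fin 3) F).submatrix (Equiv.refl (Fin 3)) g) := by
    rw [Matrix.one_submatrix_mul, Matrix.mul_submatrix_one]
    simp
  have hrank : (M.submatrix f g).rank = m := by
    rw [Matrix.rank_of_isUnit _ ((Matrix.isUnit_iff_isUnit_det _).mpr h)]
    simp
  set P := (1 : Matrix (Fin 3) (Fin 3) F).submatrix f (Equiv.refl (Fin 3)) with hP
  set Q := (1 : Matrix (Fin 3) (Fin 3) F).submatrix (Equiv.refl (Fin 3)) g with hQ
  have hle1 : (P * M * Q).rank ≤ (P * M).rank := Matrix.rank_mul_le_left (P * M) Q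
  have hle2 : (P * M).rank ≤ M.rank := Matrix.rank_mul_le_right P M
  rw [← h1] at hle1
  rw [hrank] at hle1
  omega

theorem two_le_rank_of_minor {F : Type*} [Field F]
    (M : Matrix (Fin 3) (Fin 3) F) (i j k l : Fin 3)
    (h : M i k * M j l - M i l * M j k ≠ 0) : 2 ≤ M.rank := by
  have := le_rank_of_submatrix M ![i, j] ![k, l] ?_
  · exact this
  · rw [Matrix.det_fin_two]
    simpa using isUnit_iff_ne_zero.mpr h

theorem rank_eq_one_of_vecMulVec {F : Type*} [Field F]
    (M : Matrix (Fin 3) (Fin 3) F) (u : Fin 3 → F) (i : Fin 3) (hui : u i ≠ 0)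
    (hM : M = Matrix.vecMulVec u u) : M.rank = 1 := by
  refine le_antisymm ?_ ?_
  · rw [hM, Matrix.vecMulVec_eq (Fin 1)]
    calc (Matrix.replicateCol (Fin 1) u * Matrix.replicateRow (Fin 1) u).rank
        ≤ (Matrix.replicateCol (Fin 1) u).rank := Matrix.rank_mul_le_left _ _
      _ ≤ 1 := by simpa using (Matrix.replicateCol (Fin 1) u).rank_le_card_width
  · refine le_rank_of_submatrix M ![i] ![i] ?_
    rw [Matrix.det_fin_one]
    have : M i i = u i * u i := by rw [hM]; rfl
    rw [Matrix.submatrix_apply]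
    simp only [Matrix.cons_val_fin_one, this]
    exact isUnit_iff_ne_zero.mpr (mul_ne_zero hui hui)

/-- The code, as a set of matrices. -/
def codeSet : Set (Matrix (Fin 3) (Fin 3) (ZMod 2)) := Set.range fun p => mk (bc p)

end TwoCodeAux

theorem maximal_two_code_S32_size_22 :
    ∃ C : Set (Matrix (Fin 3) (Fin 3) (ZMod 2)),
      (∀ A ∈ C, A.IsSymm) ∧
      C.ncard = 22 ∧
      (∀ A ∈ C, ∀ B ∈ C, A ≠ B → 2 ≤ (A - B).rank) ∧
      (∀ A : Matrix (Fin 3) (Fin 3) (ZMod 2), A.IsSymm → A ∉ C →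
        ∃ B ∈ C, (A - B).rank = 1) := by
  classical
  open TwoCodeAux in
  refine ⟨codeSet, ?_, ?_, ?_, ?_⟩
  · rintro A ⟨p, rfl⟩
    rw [Matrix.IsSymm]
    ext i j
    simp only [Matrix.transpose_apply, mk_apply]
    rw [bsymm p j i]
  · have hinj : Function.Injective fun p => mk (bc p) := by
      intro p q h
      by_contra hne
      obtain ⟨i, j, hij⟩ := bdistinct p q hne
      exact hij (e_inj _ _ (by
        have : mk (bc p) i j = mk (bc q) i j := by rw [show mk (bc p) = mk (bc q) from h]
        simpa using this))
    rw [codeSet, ← Set.image_univ, Set.ncard_image_of_injective _ hinj, Set.ncard_univ]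
    simp
  · rintro A ⟨p, rfl⟩ B ⟨q, rfl⟩ hne
    have hpq : p ≠ q := by rintro rfl; exact hne rfl
    obtain ⟨i, j, k, l, h⟩ := bminor p q hpq
    refine two_le_rank_of_minor _ i j k l ?_
    have hsub : ∀ r s : Fin 3,
        (mk (bc p) - mk (bc q)) r s = e (xor (bc p r s) (bc q r s)) := by
      intro r s
      rw [Matrix.sub_apply, mk_apply, mk_apply, e_sub]
    rw [hsub, hsub, hsub, hsub, e_mul, e_mul, e_sub, e_ne_zero]
    exact h
  · intro A hsymm hA
    have happ : ∀ i j : Fin 3, A j i = A i j := fun i j => by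
      conv_lhs => rw [← hsymm]
      rfl
    obtain ⟨a, ha⟩ := e_surj (A 0 0)
    obtain ⟨b, hb⟩ := e_surj (A 1 1)
    obtain ⟨c, hc⟩ := e_surj (A 2 2)
    obtain ⟨d, hd⟩ := e_surj (A 0 1)
    obtain ⟨ee, he⟩ := e_surj (A 0 2)
    obtain ⟨ff, hf⟩ := e_surj (A 1 2)
    have hAeq : A = mk (![![a,d,ee], ![d,b,ff], ![ee,ff,c]]) := by
      ext i j
      fin_cases i <;> fin_cases j <;>
        first
          | exact ha.symm | exact hb.symm | exact hc.symm
          | exact hd.symm | exact he.symm | exact hf.symm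
          | exact (happ 0 1).trans hd.symm
          | exact (happ 0 2).trans he.symm
          | exact (happ 1 2).trans hf.symm
    have hnotmem : ∀ p : Fin 22, ∃ i j : Fin 3,
        (![![a,d,ee], ![d,b,ff], ![ee,ff,c]] : Fin 3 → Fin 3 → Bool) i j ≠ bc p i j := by
      intro p
      by_contra hcon
      push_neg at hcon
      apply hA
      refine ⟨p, ?_⟩
      show mk (bc p) = A
      rw [hAeq]
      exact congrArg mk (funext fun i => funext fun j => (hcon i j).symm)
    obtain ⟨p, x, y, z, hxyz, hforall⟩ := bmax a b c d ee ff hnotmem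
    obtain ⟨i, hi⟩ := or3 x y z hxyz
    refine ⟨mk (bc p), ⟨p, rfl⟩, ?_⟩
    refine rank_eq_one_of_vecMulVec _ (fun r => e ((![x,y,z] : Fin 3 → Bool) r)) i ?_ ?_
    · rw [e_ne_zero]; exact hi
    · ext r s
      rw [Matrix.vecMulVec_apply, hAeq, Matrix.sub_apply, mk_apply, mk_apply, e_sub,
        hforall r s, ← e_mul]
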